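/- Let σ2 > 0, B > 0, β(x) = σ2·(2^{x/B} − 1), β'(x) = (σ2·ln 2 / B)·2^{x/B}, g(x) = β(x) − x·β'(x), and fix c > 0. For g̃ > 0 let r(g̃) > 0 be the unique solution of g(r) = −g̃·c. Then the map g̃ ↦ r(g̃) is strictly increasing, and the map g̃ ↦ β'(r(g̃))/g̃ is strictly decreasing. Consequently, for any α ≥ 0, λ > 0, κ > 0, C > 0, R > 0, T > 0, the quantity ℓ(g̃) = max(R − √((T²/(3·κ·C³))·(α/λ + β'(r(g̃))/g̃)), 0) is nondecreasing in g̃. -/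

import Mathlib

private lemma Dpos (u : ℝ) (hu : 0 < u) : 0 < (u - 1) * Real.exp u + 1 := by
  have h := Real.add_one_lt_exp (x := -u) (by linarith)
  have h2 : Real.exp (-u) * Real.exp u = 1 := by
    rw [← Real.exp_add]; simp
  nlinarith [Real.exp_pos u, Real.exp_pos (-u)]

private lemma Dmono : StrictMonoOn (fun u : ℝ => (u - 1) * Real.exp u + 1) (Set.Ici 0) := by
  apply strictMonoOn_of_deriv_pos (convex_Ici 0)
  · fun_prop
  · intro x hx
    rw [interior_Ici] at hx
    have hd : HasDerivAt (fun u : ℝ => (u - 1) * Real.exp u + 1) (x * Real.exp x) x := by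
      have h1 : HasDerivAt (fun u : ℝ => (u - 1)) 1 x := (hasDerivAt_id x).sub_const 1
      have := (h1.mul (Real.hasDerivAt_exp x)).add_const 1
      exact this.congr_deriv (by ring)
    rw [hd.deriv]
    exact mul_pos hx (Real.exp_pos x)

private lemma psi_anti {u v : ℝ} (hu : 0 < u) (huv : u < v) :
    Real.exp v / ((v - 1) * Real.exp v + 1) < Real.exp u / ((u - 1) * Real.exp u + 1) := by
  have hv : 0 < v := hu.trans huv
  have hDu := Dpos u hu
  have hDv := Dpos v hv
  rw [div_lt_div_iff₀ hDv hDu]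
  have h1 : (u - v) + 1 < Real.exp (u - v) := Real.add_one_lt_exp (by linarith)
  have h2 : Real.exp (u - v) * Real.exp v = Real.exp u := by
    rw [← Real.exp_add]; ring_nf
  have h3 : 1 < Real.exp u := by
    have := Real.add_one_lt_exp (ne_of_gt hu); linarith
  nlinarith [Real.exp_pos u, Real.exp_pos v,
    mul_pos (sub_pos.mpr huv) (Real.exp_pos v)]

theorem stmt14 (σ2 B : ℝ) (hσ2 : 0 < σ2) (hB : 0 < B)
    (β β' g : ℝ → ℝ)
    (hβ : ∀ x, β x = σ2 * ((2 : ℝ) ^ (x / B) - 1))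
    (hβ' : ∀ x, β' x = σ2 * Real.log 2 / B * (2 : ℝ) ^ (x / B))
    (hg : ∀ x, g x = β x - x * β' x)
    (c : ℝ) (hc : 0 < c)
    (r : ℝ → ℝ)
    (hr : ∀ gtld : ℝ, 0 < gtld → 0 < r gtld ∧ g (r gtld) = -(gtld * c)) :
    StrictMonoOn r (Set.Ioi 0) ∧
    StrictAntiOn (fun gtld => β' (r gtld) / gtld) (Set.Ioi 0) ∧
    ∀ α lam κ C R T : ℝ, 0 ≤ α → 0 < lam → 0 < κ → 0 < C → 0 < R → 0 < T →
      MonotoneOn (fun gtld =>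
        max (R - Real.sqrt (T ^ 2 / (3 * κ * C ^ 3) * (α / lam + β' (r gtld) / gtld))) 0)
        (Set.Ioi 0) := by
  have hlog2 : 0 < Real.log 2 := Real.log_pos one_lt_two
  -- u(g̃) := log 2 * (r g̃ / B)
  have hupos : ∀ gt : ℝ, 0 < gt → 0 < Real.log 2 * (r gt / B) := fun gt hgt =>
    mul_pos hlog2 (div_pos (hr gt hgt).1 hB)
  have hrpow : ∀ gt : ℝ, (2 : ℝ) ^ (r gt / B) = Real.exp (Real.log 2 * (r gt / B)) :=
    fun gt => Real.rpow_def_of_pos (by norm_num) _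
  have key : ∀ gt : ℝ, 0 < gt →
      σ2 * ((Real.log 2 * (r gt / B) - 1) * Real.exp (Real.log 2 * (r gt / B)) + 1)
        = gt * c := by
    intro gt hgt
    have h2 := (hr gt hgt).2
    rw [hg, hβ, hβ', hrpow] at h2
    have hB' : B ≠ 0 := ne_of_gt hB
    field_simp at h2 ⊢
    linear_combination -h2
  -- u is strictly monotone in g̃
  have humono : ∀ g1 g2 : ℝ, 0 < g1 → 0 < g2 → g1 < g2 →
      Real.log 2 * (r g1 / B) < Real.log 2 * (r g2 / B) := by
    intro g1 g2 h1 h2 h12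
    have k1 := key g1 h1
    have k2 := key g2 h2
    have hD : ((Real.log 2 * (r g1 / B) - 1) * Real.exp (Real.log 2 * (r g1 / B)) + 1)
        < ((Real.log 2 * (r g2 / B) - 1) * Real.exp (Real.log 2 * (r g2 / B)) + 1) := by
      nlinarith [mul_pos (sub_pos.mpr h12) hc]
    have := (Dmono.lt_iff_lt (le_of_lt (hupos g1 h1)) (le_of_lt (hupos g2 h2))).mp hD
    exact this
  have hrmono : StrictMonoOn r (Set.Ioi 0) := by
    intro g1 h1 g2 h2 h12
    have := humono g1 g2 h1 h2 h12
    have h' : r g1 / B < r g2 / B := lt_of_mul_lt_mul_left this (le_of_lt hlog2)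
    calc r g1 = (r g1 / B) * B := (div_mul_cancel₀ _ hB.ne').symm
    _ < (r g2 / B) * B := mul_lt_mul_of_pos_right h' hB
    _ = r g2 := div_mul_cancel₀ _ hB.ne'
  -- value formula for β'(r g̃)/g̃
  have hval : ∀ gt : ℝ, 0 < gt → β' (r gt) / gt
      = Real.log 2 * c / B *
        (Real.exp (Real.log 2 * (r gt / B)) /
          ((Real.log 2 * (r gt / B) - 1) * Real.exp (Real.log 2 * (r gt / B)) + 1)) := by
    intro gt hgt
    set u := Real.log 2 * (r gt / B) with hu
    have hD := Dpos u (hupos gt hgt)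
    have k := key gt hgt
    rw [← hu] at k
    rw [hβ', hrpow gt, ← hu]
    have hgt' : gt ≠ 0 := ne_of_gt hgt
    clear_value u
    have hD' := hD.ne'
    field_simp
    rw [eq_div_iff (by rw [mul_comm]; exact hD')]
    linear_combination k
  have hanti : StrictAntiOn (fun gtld => β' (r gtld) / gtld) (Set.Ioi 0) := by
    intro g1 h1 g2 h2 h12
    simp only
    rw [hval g1 h1, hval g2 h2]
    have hpsi := psi_anti (hupos g1 h1) (humono g1 g2 h1 h2 h12)
    have hpos : 0 < Real.log 2 * c / B := by positivity
    exact mul_lt_mul_of_pos_left hpsi hpos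
  refine ⟨hrmono, hanti, ?_⟩
  intro α lam κ C R T hα hlam hκ hC hR hT
  intro g1 h1 g2 h2 hle
  simp only [Set.mem_Ioi] at h1 h2
  rcases eq_or_lt_of_le hle with heq | hlt
  · subst heq; exact le_rfl
  · have hlt' : β' (r g2) / g2 < β' (r g1) / g1 := hanti h1 h2 hlt
    have hK : (0:ℝ) ≤ T ^ 2 / (3 * κ * C ^ 3) := by positivity
    have harg : T ^ 2 / (3 * κ * C ^ 3) * (α / lam + β' (r g2) / g2)
        ≤ T ^ 2 / (3 * κ * C ^ 3) * (α / lam + β' (r g1) / g1) :=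
      mul_le_mul_of_nonneg_left (by linarith) hK
    have hsqrt := Real.sqrt_le_sqrt harg
    exact max_le_max (by linarith) le_rfl
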